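/- arXiv:math/0501119 — 4 statements merged into one kernel-verified Lean document; each statement's English description precedes it below -/
import Mathlib

section
/- Suppose the dominant roots z₁,…,z_ν (1 < ν < λ−1) all have the same modulus ρ and satisfy z_j^σ = z₁^σ for all j ≤ ν (vertices of a regular σ-gon), and ρ > |z_{ν+1}| > |z_{ν+2}| ≥ … ≥ |z_λ|. Then for n+λ ≡ m (mod σ), V_{n+λ}(z) = (z−z_{ν+1})···(z−z_λ)·z₁^{n+λ−m}·ω_m(z) + D(z)·Σ_{j=ν+1}^λ C_j·z_j^{n+λ}/(z−z_j), where ω_m(z) = Σ_{k=1}^ν C_k·z_k^m·Δ_k(z), Δ(z) = (z−z₁)···(z−z_ν), Δ_k(z) = Δ(z)/(z−z_k). -/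
open Polynomial Finset

/-- Splitting of `V_{n+λ}` into dominant and nondominant parts, for `n+λ ≡ m (mod σ)`. -/
theorem stmt4 (lam nu sig mm : ℕ) (hnu1 : 1 < nu) (hnul : nu + 1 < lam)
    (hsig : nu ≤ sig) (hmm : mm < sig)
    (z A : Fin lam → ℂ) (hz : Function.Injective z)
    (hA : ∀ j, A j ≠ 0)
    (hmod : ∀ j : Fin lam, (j : ℕ) < nu →
      ‖z j‖ = ‖z ⟨0, by omega⟩‖)
    (hroot : ∀ j : Fin lam, (j : ℕ) < nu → z j ^ sig = z ⟨0, by omega⟩ ^ sig)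
    (hdrop : ∀ j : Fin lam, nu ≤ (j : ℕ) →
      ‖z j‖ < ‖z ⟨0, by omega⟩‖)
    (hdrop1 : ‖z ⟨nu + 1, hnul⟩‖ < ‖z ⟨nu, by omega⟩‖)
    (hdrop2 : ∀ j : Fin lam, nu + 1 ≤ (j : ℕ) →
      ‖z j‖ ≤ ‖z ⟨nu + 1, hnul⟩‖)
    (n : ℕ) (hn : (n + lam) % sig = mm % sig) (hmn : mm ≤ n + lam)
    (w : ℂ) (hw : ∀ j : Fin lam, nu ≤ (j : ℕ) → w ≠ z j) :
    let D : Polynomial ℂ := ∏ i, (Polynomial.X - Polynomial.C (z i))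
    let Dj : Fin lam → Polynomial ℂ :=
      fun j => ∏ i ∈ Finset.univ.erase j, (Polynomial.X - Polynomial.C (z i))
    let Cc : Fin lam → ℂ := fun j => 1 / (((Dj j).eval (z j)) ^ 2 * A j)
    let V : ℕ → Polynomial ℂ := fun k => ∑ j, Polynomial.C (Cc j * z j ^ k) * Dj j
    let dom : Finset (Fin lam) := Finset.univ.filter (fun j => (j : ℕ) < nu)
    let ω : Polynomial ℂ := ∑ k ∈ dom, Polynomial.C (Cc k * z k ^ mm) *
      ∏ i ∈ dom.erase k, (Polynomial.X - Polynomial.C (z i))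
    (V (n + lam)).eval w =
      (∏ j ∈ Finset.univ.filter (fun j : Fin lam => nu ≤ (j : ℕ)), (w - z j)) *
        (z ⟨0, by omega⟩) ^ (n + lam - mm) * ω.eval w +
      D.eval w * ∑ j ∈ Finset.univ.filter (fun j : Fin lam => nu ≤ (j : ℕ)),
        Cc j * z j ^ (n + lam) / (w - z j) := by
  intro D Dj Cc V dom ω
  classical
  set j0 : Fin lam := ⟨0, by omega⟩ with hj0def
  -- power identity on dominant roots
  have hpow : ∀ j : Fin lam, (j : ℕ) < nu →
      z j ^ (n + lam) = z j ^ mm * z j0 ^ (n + lam - mm) := by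
    intro j hj
    obtain ⟨t, ht⟩ : sig ∣ (n + lam - mm) :=
      (Nat.modEq_iff_dvd' hmn).mp (Nat.ModEq.symm hn)
    have h1 : z j ^ (n + lam) = z j ^ mm * z j ^ (n + lam - mm) := by
      rw [← pow_add]; congr 1; omega
    rw [h1, ht, pow_mul, pow_mul, hroot j hj]
  -- evaluations as products
  have hDjw : ∀ j : Fin lam, (Dj j).eval w = ∏ i ∈ Finset.univ.erase j, (w - z i) := by
    intro j; simp [Dj, Polynomial.eval_prod]
  have hDw : D.eval w = ∏ i, (w - z i) := by
    simp [D, Polynomial.eval_prod]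
  have hDfac : ∀ j : Fin lam, D.eval w = (w - z j) * (Dj j).eval w := by
    intro j
    rw [hDw, hDjw, Finset.mul_prod_erase Finset.univ (fun i => w - z i) (Finset.mem_univ j)]
  -- the two index sets
  set S2 : Finset (Fin lam) := Finset.univ.filter (fun j : Fin lam => nu ≤ (j : ℕ)) with hS2
  have hS2' : Finset.univ.filter (fun j : Fin lam => ¬ (j : ℕ) < nu) = S2 := by
    simp [hS2, not_lt]
  -- eval of V as a sum
  have hVeval : (V (n + lam)).eval w
      = ∑ j, Cc j * z j ^ (n + lam) * (Dj j).eval w := by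
    simp [V, Polynomial.eval_finset_sum]
  rw [hVeval, ← Finset.sum_filter_add_sum_filter_not Finset.univ
      (fun j : Fin lam => (j : ℕ) < nu)
      (fun j => Cc j * z j ^ (n + lam) * (Dj j).eval w), hS2']
  have hdomsum :
      (∑ j ∈ Finset.univ.filter (fun j : Fin lam => (j : ℕ) < nu),
        Cc j * z j ^ (n + lam) * (Dj j).eval w)
      = (∏ j ∈ S2, (w - z j)) * z j0 ^ (n + lam - mm) * ω.eval w := by
    have hωeval : ω.eval w
        = ∑ k ∈ dom, Cc k * z k ^ mm * ∏ i ∈ dom.erase k, (w - z i) := by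
      simp [ω, Polynomial.eval_finset_sum, Polynomial.eval_prod]
    rw [hωeval, Finset.mul_sum]
    apply Finset.sum_congr rfl
    intro j hj
    have hjlt : (j : ℕ) < nu := (Finset.mem_filter.mp hj).2
    have hjdom : j ∈ dom := hj
    -- split Dj j eval into dominant and nondominant parts
    have hsplitDj : (Dj j).eval w =
        (∏ i ∈ dom.erase j, (w - z i)) * ∏ i ∈ S2, (w - z i) := by
      rw [hDjw, ← Finset.prod_filter_mul_prod_filter_not (Finset.univ.erase j)
        (fun i : Fin lam => (i : ℕ) < nu) (fun i => w - z i)]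
      congr 1
      · congr 1
        rw [Finset.filter_erase]
      · congr 1
        rw [Finset.filter_erase, ← hS2', Finset.erase_eq_of_notMem]
        simp [hjlt]
    rw [hsplitDj, hpow j hjlt]
    ring
  have hrest :
      (∑ j ∈ S2, Cc j * z j ^ (n + lam) * (Dj j).eval w)
      = D.eval w * ∑ j ∈ S2, Cc j * z j ^ (n + lam) / (w - z j) := by
    rw [Finset.mul_sum]
    apply Finset.sum_congr rfl
    intro j hj
    have hjge : nu ≤ (j : ℕ) := (Finset.mem_filter.mp hj).2
    have hwj : w - z j ≠ 0 := sub_ne_zero.mpr (hw j hjge)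
    rw [hDfac j]
    field_simp
  rw [hdomsum, hrest]
end

section
/- For r(z) = 2/(3(z−1)) + 2/(9(z+1)) + 1/(z−1/2): C₁ = 3/2, C₂ = 1/2, C₃ = 16/9, the roots of ω₀ and ω₁ are ζ₀ = −1/2 and ζ₁ = −2, and the Padé approximants satisfy π_{2m+1,2}(−1/2) = 0 for all m, a value different from r(−1/2) = −1. -/
open Polynomial Finset

/-- Example 4: for `r(z) = 2/(3(z−1)) + 2/(9(z+1)) + 1/(z−1/2)`:
`C₁ = 3/2`, `C₂ = 1/2`, `C₃ = 16/9`, the roots of `ω₀, ω₁` are `−1/2, −2`,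
and `π_{2m+1,2}(−1/2) = 0 ≠ r(−1/2) = −1` for every `m`. -/
theorem stmt14 :
    let z : Fin 3 → ℂ := ![1, -1, 1/2]
    let A : Fin 3 → ℂ := ![2/3, 2/9, 1]
    let Dj : Fin 3 → Polynomial ℂ :=
      fun j => ∏ i ∈ Finset.univ.erase j, (Polynomial.X - Polynomial.C (z i))
    let D : Polynomial ℂ := ∏ i, (Polynomial.X - Polynomial.C (z i))
    let N : Polynomial ℂ := ∑ j, Polynomial.C (A j) * Dj j
    let Cc : Fin 3 → ℂ := fun j => 1 / (((Dj j).eval (z j)) ^ 2 * A j)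
    let ω : ℕ → ℂ → ℂ := fun m w => Cc 0 * (z 0) ^ m * (w - z 1) + Cc 1 * (z 1) ^ m * (w - z 0)
    Cc 0 = 3 / 2 ∧ Cc 1 = 1 / 2 ∧ Cc 2 = 16 / 9 ∧
    (∀ w : ℂ, ω 0 w = 0 ↔ w = -1 / 2) ∧ (∀ w : ℂ, ω 1 w = 0 ↔ w = -2) ∧
    (∀ (m : ℕ) (V U : Polynomial ℂ),
      N * V + D * U = Polynomial.X ^ (2 * m + 4) → V.degree < 3 →
      -(U.eval (-1 / 2)) / V.eval (-1 / 2) = 0 ∧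
      -(U.eval (-1 / 2)) / V.eval (-1 / 2) ≠ N.eval (-1 / 2) / D.eval (-1 / 2)) ∧
    N.eval (-1 / 2) / D.eval (-1 / 2) = -1 := by
  intro z A Dj D N Cc ω
  have e0 : (Finset.univ.erase (0:Fin 3)) = {1,2} := by decide
  have e1 : (Finset.univ.erase (1:Fin 3)) = {0,2} := by decide
  have e2 : (Finset.univ.erase (2:Fin 3)) = {0,1} := by decide
  have hN : ∀ x : ℂ, N.eval x =
      2/3 * ((x+1)*(x-1/2)) + 2/9 * ((x-1)*(x-1/2)) + (x-1)*(x+1) := by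
    intro x
    simp only [N, Dj, A, z, Fin.sum_univ_three, e0, e1, e2]
    rw [Finset.prod_pair (by decide : (1:Fin 3) ≠ 2),
       Finset.prod_pair (by decide : (0:Fin 3) ≠ 2),
       Finset.prod_pair (by decide : (0:Fin 3) ≠ 1)]
    norm_num [Matrix.cons_val_two, Matrix.vecHead, Matrix.vecTail]
  have hD : ∀ x : ℂ, D.eval x = (x-1)*(x+1)*(x-1/2) := by
    intro x
    simp only [D, z, Fin.prod_univ_three]
    norm_num [Matrix.cons_val_two, Matrix.vecHead, Matrix.vecTail]
  have hC0 : Cc 0 = 3 / 2 := by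
    simp only [Cc, Dj, A, z, e0]
    rw [Finset.prod_pair (by decide : (1:Fin 3) ≠ 2)]
    norm_num [Matrix.cons_val_two, Matrix.vecHead, Matrix.vecTail]
  have hC1 : Cc 1 = 1 / 2 := by
    simp only [Cc, Dj, A, z, e1]
    rw [Finset.prod_pair (by decide : (0:Fin 3) ≠ 2)]
    norm_num [Matrix.cons_val_two, Matrix.vecHead, Matrix.vecTail]
  have hC2 : Cc 2 = 16 / 9 := by
    simp only [Cc, Dj, A, z, e2]
    rw [Finset.prod_pair (by decide : (0:Fin 3) ≠ 1)]
    norm_num [Matrix.cons_val_two, Matrix.vecHead, Matrix.vecTail]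
  have hND : N.eval (-1/2) / D.eval (-1/2) = -1 := by
    rw [hN, hD]; norm_num
  refine ⟨hC0, hC1, hC2, ?_, ?_, ?_, by rw [show (-1/2 : ℂ) = -(1)/2 by norm_num] at hND; exact hND⟩
  · intro w
    simp only [ω, z, hC0, hC1]
    constructor
    · intro h
      have : (2:ℂ) * w + 1 = 0 := by
        simp only [Matrix.cons_val_zero, Matrix.cons_val_one, Matrix.head_cons] at h
        linear_combination h
      linear_combination this / 2
    · intro h
      subst h
      simp only [Matrix.cons_val_zero, Matrix.cons_val_one, Matrix.head_cons]
      ring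
  · intro w
    simp only [ω, z, hC0, hC1]
    constructor
    · intro h
      have : w + 2 = 0 := by
        simp only [Matrix.cons_val_zero, Matrix.cons_val_one, Matrix.head_cons] at h
        linear_combination h
      linear_combination this
    · intro h
      subst h
      simp only [Matrix.cons_val_zero, Matrix.cons_val_one, Matrix.head_cons]
      ring
  · intro m V U hB hdeg
    have hnd : V.natDegree < 3 := by
      rcases eq_or_ne V 0 with h | h
      · simp [h]
      · exact (Polynomial.natDegree_lt_iff_degree_lt h).2 hdeg
    have hV : ∀ x : ℂ, V.eval x = V.coeff 0 + V.coeff 1 * x + V.coeff 2 * x^2 := by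
      intro x
      rw [Polynomial.eval_eq_sum_range' hnd]
      simp [Finset.sum_range_succ]
    have hb : ∀ x : ℂ, N.eval x * V.eval x + D.eval x * U.eval x = x ^ (2*m+4) := by
      intro x
      have := congrArg (Polynomial.eval x) hB
      simpa using this
    have hev : Even (2*m+4) := ⟨m+2, by ring⟩
    have hpm1 : (-1:ℂ)^(2*m+4) = 1 := by rw [hev.neg_pow, one_pow]
    have hph : (-1/2:ℂ)^(2*m+4) = (1/2:ℂ)^(2*m+4) := by
      rw [show (-1/2:ℂ) = -(1/2) by norm_num, hev.neg_pow]
    have E1 := hb 1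
    have E2 := hb (-1)
    have E3 := hb (1/2)
    have E4 := hb (-1/2)
    rw [hN, hD, hV, one_pow] at E1
    rw [hN, hD, hV, hpm1] at E2
    rw [hN, hD, hV] at E3
    rw [hN, hD, hV, hph] at E4
    have hu : U.eval (-1/2) = 0 := by
      have hD4 : ((-1/2:ℂ)-1)*((-1/2)+1)*((-1/2)-1/2) = 3/4 := by norm_num
      linear_combination (4/3) * E4 - (4/3) * E3 - (3/4) * E1 + (3/4) * E2
    constructor
    · rw [show (-1 / 2 : ℂ) = -1/2 by norm_num, hu]
      simp
    · rw [show (-1 / 2 : ℂ) = -1/2 by norm_num, hu, hND]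
      simp
end

section
/- In Example 1 (r(z) = 1/(z−1) + 1/(18(z+1)) + 1/(z−1/2)), the Padé approximants π_{n,2}(z) converge to r(z) at the point ζ₀ = 1/3 as n → ∞ (through all n), even though ζ₀ is a limit point of poles of the odd-indexed subsequence. -/
open Filter Topology

private lemma stmt15_eq (k : ℕ) :
    ((1/3 - 1) * (1/3 + 1) * (1/3 - 1/2) : ℂ) *
      (1 * (1 : ℂ) ^ k * ((1/3 + 1) * (1/3 - 1/2)) +
        2 * (-1 : ℂ) ^ k * ((1/3 - 1) * (1/3 - 1/2)) +
        (16/9) * (1/2 : ℂ) ^ k * ((1/3 - 1) * (1/3 + 1))) =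
      (((4/27 : ℝ) * (-2/9 + (2/9) * (-1:ℝ)^k - (128/81) * (1/2:ℝ)^k) : ℝ) : ℂ) := by
  push_cast
  ring

private lemma stmt15_lb (k : ℕ) :
    (16/243 : ℝ) * (1/2)^k ≤
      |(4/27 : ℝ) * (-2/9 + (2/9) * (-1:ℝ)^k - (128/81) * (1/2:ℝ)^k)| := by
  have hp : (0:ℝ) < (1/2:ℝ)^k := by positivity
  have hle : (1/2:ℝ)^k ≤ 1 := pow_le_one₀ (by norm_num) (by norm_num)
  rcases Nat.even_or_odd k with hk | hk
  · rw [hk.neg_one_pow]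
    have : (4/27 : ℝ) * (-2/9 + (2/9) * 1 - (128/81) * (1/2:ℝ)^k)
        = -((512/2187) * (1/2:ℝ)^k) := by ring
    rw [this, abs_neg, abs_of_pos (by positivity)]
    nlinarith
  · rw [hk.neg_one_pow]
    have : (4/27 : ℝ) * (-2/9 + (2/9) * (-1) - (128/81) * (1/2:ℝ)^k)
        = -((16/243) + (512/2187) * (1/2:ℝ)^k) := by ring
    rw [this, abs_neg, abs_of_pos (by positivity)]
    nlinarith

/-- In Example 1 (`r(z) = 1/(z−1) + 1/(18(z+1)) + 1/(z−1/2)`), the Padé approximants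
`π_{n,2}` converge to `r` at `ζ₀ = 1/3` through all `n`: by the error formula
`r(1/3) − π_{n,2}(1/3) = (1/3)^{n+3}/(D(1/3)·V_{n+3}(1/3))`, the error tends to `0`,
i.e. `π_{n,2}(1/3) → r(1/3)`. -/
theorem stmt15 :
    let V : ℕ → ℂ → ℂ := fun k w =>
      1 * (1 : ℂ) ^ k * ((w + 1) * (w - 1/2)) + 2 * (-1 : ℂ) ^ k * ((w - 1) * (w - 1/2)) +
        (16/9) * (1/2 : ℂ) ^ k * ((w - 1) * (w + 1))
    let Dval : ℂ := (1/3 - 1) * (1/3 + 1) * (1/3 - 1/2)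
    let rval : ℂ := 1 / (1/3 - 1) + 1 / (18 * (1/3 + 1)) + 1 / (1/3 - 1/2)
    Tendsto (fun n : ℕ => (1/3 : ℂ) ^ (n + 3) / (Dval * V (n + 3) (1/3))) atTop (𝓝 0) ∧
    Tendsto (fun n : ℕ => rval - (1/3 : ℂ) ^ (n + 3) / (Dval * V (n + 3) (1/3)))
      atTop (𝓝 rval) := by
  intro V Dval rval
  have key : Tendsto (fun n : ℕ => (1/3 : ℂ) ^ (n + 3) / (Dval * V (n + 3) (1/3)))
      atTop (𝓝 0) := by
    apply squeeze_zero_norm (a := fun n : ℕ => (243/16 : ℝ) * (2/3)^n)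
    · intro n
      have hEq := stmt15_eq (n + 3)
      have hlb := stmt15_lb (n + 3)
      set a : ℝ := (4/27 : ℝ) * (-2/9 + (2/9) * (-1:ℝ)^(n+3) - (128/81) * (1/2:ℝ)^(n+3))
        with ha
      have hden : Dval * V (n + 3) (1/3) = ((a : ℝ) : ℂ) := hEq
      have hapos : (0:ℝ) < |a| := lt_of_lt_of_le (by positivity) hlb
      rw [hden, norm_div, norm_pow, Complex.norm_real]
      have hnum : ‖(1/3 : ℂ)‖ = (1/3 : ℝ) := by
        rw [show (1/3 : ℂ) = ((1/3 : ℝ) : ℂ) by norm_num, Complex.norm_real]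
        norm_num
      rw [hnum, Real.norm_eq_abs]
      have h1 : (1/3:ℝ)^(n+3) / |a| ≤ (1/3:ℝ)^(n+3) / ((16/243) * (1/2)^(n+3)) := by
        apply div_le_div_of_nonneg_left (by positivity) (by positivity) hlb
      calc (1/3:ℝ)^(n+3) / |a| ≤ (1/3:ℝ)^(n+3) / ((16/243) * (1/2)^(n+3)) := h1
        _ = (243/16) * (2/3)^(n+3) := by
            rw [div_pow, div_pow]
            field_simp
            rw [← mul_pow]; norm_num
        _ ≤ (243/16) * (2/3)^n := by
            have : (2/3:ℝ)^(n+3) ≤ (2/3)^n :=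
              pow_le_pow_of_le_one (by norm_num) (by norm_num) (by omega)
            nlinarith
    · have := tendsto_pow_atTop_nhds_zero_of_lt_one
        (show (0:ℝ) ≤ 2/3 by norm_num) (show (2/3:ℝ) < 1 by norm_num)
      simpa using this.const_mul (243/16 : ℝ)
  refine ⟨key, ?_⟩
  simpa using tendsto_const_nhds.sub key
end

section
/- In Example 2 (r(z) = 1/(z−1) + 1/(z+1) + 1/(z−1/2)), the odd-indexed Padé approximants satisfy π_{2m+1,2}(−4/5) → ∞ as m → ∞, i.e., |π_{2m+1,2}(−4/5)| → ∞. -/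
open Filter Topology

/-- In Example 2 (`r(z) = 1/(z−1) + 1/(z+1) + 1/(z−1/2)`), the odd-indexed Padé
approximants satisfy `|π_{2m+1,2}(−4/5)| → ∞`, where by the error formula
`π_{2m+1,2}(−4/5) = r(−4/5) − (−4/5)^{2m+4}/(D(−4/5)·V_{2m+4}(−4/5))`. -/
theorem stmt16 :
    let V : ℕ → ℂ → ℂ := fun k w =>
      1 * (1 : ℂ) ^ k * ((w + 1) * (w - 1/2)) + (1/9) * (-1 : ℂ) ^ k * ((w - 1) * (w - 1/2)) +
        (16/9) * (1/2 : ℂ) ^ k * ((w - 1) * (w + 1))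
    let Dval : ℂ := (-4/5 - 1) * (-4/5 + 1) * (-4/5 - 1/2)
    let rval : ℂ := 1 / (-4/5 - 1) + 1 / (-4/5 + 1) + 1 / (-4/5 - 1/2)
    Tendsto (fun m : ℕ => ‖
        (rval - (-4/5 : ℂ) ^ (2 * m + 4) / (Dval * V (2 * m + 4) (-4/5)))‖)
      atTop atTop := by
  intro V Dval rval
  have key : ∀ m : ℕ, rval - (-4/5 : ℂ) ^ (2 * m + 4) / (Dval * V (2 * m + 4) (-4/5))
      = rval + (2560/117 : ℂ) * (64/25 : ℂ) ^ m := by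
    intro m
    have hV : V (2*m+4) (-4/5) = -(1/25 : ℂ) * (1/4 : ℂ) ^ m := by
      simp only [V, pow_add, pow_mul]
      norm_num
      ring
    have hpow : (-4/5 : ℂ) ^ (2*m+4) = (64/25 : ℂ)^m * (1/4 : ℂ)^m * (256/625) := by
      rw [pow_add, pow_mul, ← mul_pow]
      norm_num
    rw [hV, hpow]
    have h4 : ((1/4 : ℂ))^m ≠ 0 := pow_ne_zero _ (by norm_num)
    simp only [Dval]
    field_simp
    ring
  simp only [key]
  have h1 : Tendsto (fun m : ℕ => (2560/117 : ℝ) * (64/25 : ℝ) ^ m - ‖rval‖)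
      atTop atTop := by
    apply Tendsto.atTop_add _ tendsto_const_nhds
    exact (tendsto_pow_atTop_atTop_of_one_lt (by norm_num)).const_mul_atTop (by norm_num)
  apply tendsto_atTop_mono _ h1
  intro m
  have habs : ‖(2560/117 : ℂ) * (64/25 : ℂ) ^ m‖
      = (2560/117 : ℝ) * (64/25 : ℝ) ^ m := by
    simp [norm_mul, norm_pow, norm_div]
  calc (2560/117 : ℝ) * (64/25 : ℝ) ^ m - ‖rval‖
      = ‖(2560/117 : ℂ) * (64/25 : ℂ) ^ m‖ - ‖rval‖ := by rw [habs]
    _ ≤ ‖rval + (2560/117 : ℂ) * (64/25 : ℂ) ^ m‖ := by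
        have := norm_sub_norm_le ((2560/117 : ℂ) * (64/25 : ℂ) ^ m) (-rval)
        simpa [sub_neg_eq_add, add_comm] using this
end
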